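/- Fix a natural code ε : ℝⁿ → ℕⁿ. If T ⊆ ℝⁿ determines a cube tiling of ℝⁿ, then ε restricted to T is injective; consequently ε maps T bijectively onto ℕⁿ. -/

import Mathlib

/-- The half-open unit cube `[0,1)ⁿ` translated by `t`. -/
def Cube {n : ℕ} (t : Fin n → ℝ) : Set (Fin n → ℝ) :=
  {x | ∀ j, t j ≤ x j ∧ x j < t j + 1}

/-- `T` determines a cube tiling of `ℝⁿ`: the cubes `[0,1)ⁿ + t`, `t ∈ T`,
are pairwise disjoint and their union is all of `ℝⁿ`. -/
def IsCubeTiling {n : ℕ} (T : Set (Fin n → ℝ)) : Prop :=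
  (∀ s ∈ T, ∀ t ∈ T, s ≠ t → Disjoint (Cube s) (Cube t)) ∧
  (⋃ t ∈ T, Cube t) = Set.univ

/-- `T ⊆ ℝ` determines a tiling of `ℝ` by unit intervals `[0,1) + t`. -/
def IsCubeTiling1 (T : Set ℝ) : Prop :=
  (∀ s ∈ T, ∀ t ∈ T, s ≠ t → Disjoint (Set.Ico s (s + 1)) (Set.Ico t (t + 1))) ∧
  (⋃ t ∈ T, Set.Ico t (t + 1)) = Set.univ

/-- The tiling determined by `T` contains a column: there are `s ∈ ℝⁿ` and a
standard basis vector `eᵢ` such that `s + k·eᵢ ∈ T` for every `k ∈ ℤ`. -/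
def ContainsColumn {n : ℕ} (T : Set (Fin n → ℝ)) : Prop :=
  ∃ s : Fin n → ℝ, ∃ i : Fin n, ∀ k : ℤ, (s + (k : ℝ) • (Pi.single i 1 : Fin n → ℝ)) ∈ T

/-- A natural code of `ℝⁿ`: each `ε j : ℝ → ℕ⁺` restricts to a bijection from
every coset `x + ℤ` onto the positive integers. -/
def IsNaturalCode {n : ℕ} (ε : Fin n → ℝ → ℕ+) : Prop :=
  ∀ j : Fin n, ∀ x : ℝ, Set.BijOn (ε j) {y : ℝ | ∃ m : ℤ, y = x + m} Set.univ

section Aux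

/-- In a 1-D tiling by half-open unit intervals, if `a` is a left endpoint then so is `a+1`. -/
lemma tiling1_step_up {A : Set ℝ} (hA : IsCubeTiling1 A) {a : ℝ} (ha : a ∈ A) :
    a + 1 ∈ A := by
  have hcov : (a + 1) ∈ ⋃ t ∈ A, Set.Ico t (t + 1) := hA.2 ▸ Set.mem_univ _
  simp only [Set.mem_iUnion, Set.mem_Ico] at hcov
  obtain ⟨b, hb, hb1, hb2⟩ := hcov
  by_cases h : b = a + 1
  · exact h ▸ hb
  · exfalso
    have hba : a < b := by linarith
    have hblt : b < a + 1 := lt_of_le_of_ne hb1 h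
    have hdisj := hA.1 a ha b hb (by linarith)
    exact Set.disjoint_left.1 hdisj (Set.mem_Ico.2 ⟨le_of_lt hba, hblt⟩)
      (Set.mem_Ico.2 ⟨le_refl b, by linarith⟩)

/-- In a 1-D tiling by half-open unit intervals, if `a` is a left endpoint then so is `a-1`. -/
lemma tiling1_step_down {A : Set ℝ} (hA : IsCubeTiling1 A) {a : ℝ} (ha : a ∈ A) :
    a - 1 ∈ A := by
  have hcov : (a - 1) ∈ ⋃ t ∈ A, Set.Ico t (t + 1) := hA.2 ▸ Set.mem_univ _
  simp only [Set.mem_iUnion, Set.mem_Ico] at hcov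
  obtain ⟨b, hb, hb1, hb2⟩ := hcov
  by_cases h : b = a - 1
  · exact h ▸ hb
  · exfalso
    have hblt : b < a - 1 := lt_of_le_of_ne hb1 h
    have hb1A : b + 1 ∈ A := tiling1_step_up hA hb
    have hne : b + 1 ≠ a := by intro hh; linarith
    have hdisj := hA.1 (b + 1) hb1A a ha hne
    exact Set.disjoint_left.1 hdisj
      (Set.mem_Ico.2 ⟨by linarith, by linarith⟩)
      (Set.mem_Ico.2 ⟨le_refl a, by linarith⟩)

/-- A 1-D tiling by half-open unit intervals has left-endpoint set equal to a coset of `ℤ`. -/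
lemma tiling1_coset {A : Set ℝ} (hA : IsCubeTiling1 A) :
    ∃ c : ℝ, A = {y : ℝ | ∃ m : ℤ, y = c + m} := by
  have h0 : (0 : ℝ) ∈ ⋃ t ∈ A, Set.Ico t (t + 1) := hA.2 ▸ Set.mem_univ _
  simp only [Set.mem_iUnion, Set.mem_Ico] at h0
  obtain ⟨c, hc, -, -⟩ := h0
  have hall : ∀ m : ℤ, c + m ∈ A := by
    intro m
    induction m using Int.induction_on with
    | zero => simpa using hc
    | succ k ihk =>
        have := tiling1_step_up hA ihk
        convert this using 1
        push_cast; ring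
    | pred k ihk =>
        have := tiling1_step_down hA ihk
        convert this using 1
        push_cast; ring
  refine ⟨c, Set.ext fun b => ⟨fun hb => ?_, fun ⟨m, hm⟩ => hm ▸ hall m⟩⟩
  set m : ℤ := ⌊b - c⌋ with hm
  have h1 : (m : ℝ) ≤ b - c := Int.floor_le _
  have h2 : b - c < m + 1 := Int.lt_floor_add_one _
  refine ⟨m, ?_⟩
  by_contra hne
  have hne' : b ≠ c + m := hne
  have hdisj := hA.1 b hb (c + m) (hall m) hne'
  exact Set.disjoint_left.1 hdisj
    (Set.mem_Ico.2 ⟨le_refl b, by linarith⟩)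
    (Set.mem_Ico.2 ⟨by linarith, by linarith⟩)

lemma mem_cube_snoc {n : ℕ} (t : Fin (n + 1) → ℝ) (y : Fin n → ℝ) (r : ℝ) :
    Fin.snoc y r ∈ Cube t ↔
      ((fun j : Fin n => y j) ∈ Cube (fun j : Fin n => t j.castSucc) ∧
        (t (Fin.last n) ≤ r ∧ r < t (Fin.last n) + 1)) := by
  constructor
  · intro h
    refine ⟨fun j => ?_, ?_⟩
    · have := h j.castSucc; simpa using this
    · have := h (Fin.last n); simpa using this
  · rintro ⟨h1, h2⟩ j
    refine Fin.lastCases ?_ ?_ j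
    · simpa using h2
    · intro i
      have := h1 i
      simpa using this

/-- Key lemma: for a cube tiling and a natural code, every value in `ℕ⁺ⁿ` is attained
by exactly one element of the tiling set. -/
lemma code_exists_unique : ∀ (n : ℕ) (ε : Fin n → ℝ → ℕ+), IsNaturalCode ε →
    ∀ (T : Set (Fin n → ℝ)), IsCubeTiling T →
    ∀ v : Fin n → ℕ+, ∃! t, t ∈ T ∧ ∀ j, ε j (t j) = v j := by
  intro n
  induction n with
  | zero =>
      intro ε hε T hT v
      have h0 : (fun _ : Fin 0 => (0 : ℝ)) ∈ ⋃ t ∈ T, Cube t := hT.2 ▸ Set.mem_univ _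
      simp only [Set.mem_iUnion] at h0
      obtain ⟨t, ht, -⟩ := h0
      refine ⟨t, ⟨ht, fun j => j.elim0⟩, ?_⟩
      intro s _
      funext j
      exact j.elim0
  | succ n ih =>
      intro ε hε T hT v
      -- the slice lemma: for every height r there is a unique tile over the slice
      -- whose first n code coordinates are prescribed
      have slice : ∀ r : ℝ, ∃! t, (t ∈ T ∧ t (Fin.last n) ≤ r ∧ r < t (Fin.last n) + 1) ∧
          ∀ j : Fin n, ε j.castSucc (t j.castSucc) = v j.castSucc := by
        intro r
        set Tr : Set (Fin (n + 1) → ℝ) :=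
          {t | t ∈ T ∧ t (Fin.last n) ≤ r ∧ r < t (Fin.last n) + 1} with hTr
        set T' : Set (Fin n → ℝ) :=
          (fun t : Fin (n + 1) → ℝ => fun j : Fin n => t j.castSucc) '' Tr with hT'def
        -- projection is injective on the slice
        have proj_inj : ∀ s ∈ Tr, ∀ t ∈ Tr,
            (fun j : Fin n => s j.castSucc) = (fun j : Fin n => t j.castSucc) → s = t := by
          intro s hs t ht hst
          by_contra hne
          have hdisj := hT.1 s hs.1 t ht.1 hne
          have hxs : Fin.snoc (fun j : Fin n => s j.castSucc) r ∈ Cube s :=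
            (mem_cube_snoc s _ r).2 ⟨fun j => ⟨le_refl _, by linarith⟩, hs.2⟩
          have hxt : Fin.snoc (fun j : Fin n => s j.castSucc) r ∈ Cube t := by
            rw [hst] at *
            exact (mem_cube_snoc t _ r).2 ⟨fun j => ⟨le_refl _, by linarith⟩, ht.2⟩
          exact Set.disjoint_left.1 hdisj hxs hxt
        have hT' : IsCubeTiling T' := by
          constructor
          · rintro s' ⟨s, hs, rfl⟩ t' ⟨t, ht, rfl⟩ hne
            rw [Set.disjoint_left]
            intro y hys hyt
            have hst : s ≠ t := fun h => hne (by rw [h])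
            have hdisj := hT.1 s hs.1 t ht.1 hst
            have hxs : Fin.snoc y r ∈ Cube s := (mem_cube_snoc s y r).2 ⟨hys, hs.2⟩
            have hxt : Fin.snoc y r ∈ Cube t := (mem_cube_snoc t y r).2 ⟨hyt, ht.2⟩
            exact Set.disjoint_left.1 hdisj hxs hxt
          · apply Set.eq_univ_iff_forall.2
            intro y
            have hcov : Fin.snoc y r ∈ ⋃ t ∈ T, Cube t := hT.2 ▸ Set.mem_univ _
            simp only [Set.mem_iUnion] at hcov
            obtain ⟨t, ht, hmem⟩ := hcov
            obtain ⟨h1, h2⟩ := (mem_cube_snoc t y r).1 hmem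
            simp only [Set.mem_iUnion]
            exact ⟨fun j : Fin n => t j.castSucc, ⟨t, ⟨ht, h2⟩, rfl⟩, h1⟩
        have hε' : IsNaturalCode (fun j : Fin n => ε j.castSucc) :=
          fun j x => hε j.castSucc x
        obtain ⟨t', ⟨ht'mem, ht'code⟩, ht'uniq⟩ :=
          ih (fun j : Fin n => ε j.castSucc) hε' T' hT' (fun j => v j.castSucc)
        obtain ⟨t, htTr, rfl⟩ := ht'mem
        refine ⟨t, ⟨htTr, ht'code⟩, ?_⟩
        rintro s ⟨hsTr, hscode⟩
        have hs' : (fun j : Fin n => s j.castSucc) ∈ T' := ⟨s, hsTr, rfl⟩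
        have := ht'uniq (fun j : Fin n => s j.castSucc) ⟨hs', hscode⟩
        exact proj_inj s hsTr t htTr this
      -- the set of tiles with the prescribed first n code coordinates
      set S : Set (Fin (n + 1) → ℝ) :=
        {t | t ∈ T ∧ ∀ j : Fin n, ε j.castSucc (t j.castSucc) = v j.castSucc} with hSdef
      have hSslice : ∀ r : ℝ, ∀ t ∈ S, t (Fin.last n) ≤ r → r < t (Fin.last n) + 1 →
          ∀ s ∈ S, s (Fin.last n) ≤ r → r < s (Fin.last n) + 1 → s = t := by
        intro r t ht ht1 ht2 s hs hs1 hs2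
        obtain ⟨u, -, hu⟩ := slice r
        have := hu t ⟨⟨ht.1, ht1, ht2⟩, ht.2⟩
        have hh := hu s ⟨⟨hs.1, hs1, hs2⟩, hs.2⟩
        rw [hh, this]
      -- last coordinates of tiles in S form a 1-D tiling
      set A : Set ℝ := (fun t : Fin (n + 1) → ℝ => t (Fin.last n)) '' S with hAdef
      have hA : IsCubeTiling1 A := by
        constructor
        · rintro a ⟨s, hs, rfl⟩ b ⟨t, ht, rfl⟩ hne
          rw [Set.disjoint_left]
          rintro r ⟨hr1, hr2⟩ ⟨hr3, hr4⟩
          exact hne (congrArg (fun u : Fin (n + 1) → ℝ => u (Fin.last n))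
            (hSslice r t ht hr3 hr4 s hs hr1 hr2))
        · apply Set.eq_univ_iff_forall.2
          intro r
          obtain ⟨t, ⟨⟨htT, ht1, ht2⟩, htc⟩, -⟩ := slice r
          simp only [Set.mem_iUnion]
          exact ⟨t (Fin.last n), ⟨t, ⟨htT, htc⟩, rfl⟩, ht1, ht2⟩
      obtain ⟨c, hc⟩ := tiling1_coset hA
      have hbij := hε (Fin.last n) c
      -- existence
      have hsurj := hbij.2.2
      have hvmem : v (Fin.last n) ∈ Set.univ := Set.mem_univ _
      obtain ⟨a, haA, hacode⟩ := hsurj hvmem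
      rw [← hc] at haA
      obtain ⟨t, htS, hta'⟩ := haA
      have hta : t (Fin.last n) = a := hta'
      refine ⟨t, ⟨htS.1, ?_⟩, ?_⟩
      · intro j
        refine Fin.lastCases ?_ ?_ j
        · rw [hta]; exact hacode
        · intro i; exact htS.2 i
      · rintro s ⟨hsT, hscode⟩
        have hsS : s ∈ S := ⟨hsT, fun j => hscode j.castSucc⟩
        have hsA : s (Fin.last n) ∈ A := ⟨s, hsS, rfl⟩
        have htA : t (Fin.last n) ∈ A := ⟨t, htS, rfl⟩
        have hcodeq : ε (Fin.last n) (s (Fin.last n)) = ε (Fin.last n) (t (Fin.last n)) := by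
          rw [hscode (Fin.last n), hta, hacode]
        have hlast : s (Fin.last n) = t (Fin.last n) := by
          apply hbij.2.1 (hc ▸ hsA) (hc ▸ htA) hcodeq
        exact hSslice (t (Fin.last n)) t htS (le_refl _) (by linarith) s hsS
          (le_of_eq hlast) (by rw [hlast]; linarith)

end Aux

/-- A natural code is injective on any set determining a cube tiling of `ℝⁿ`;
consequently it maps such a set bijectively onto `ℕⁿ`. -/
theorem code_bijective_on_tiling {n : ℕ} (ε : Fin n → ℝ → ℕ+) (hε : IsNaturalCode ε)
    (T : Set (Fin n → ℝ)) (hT : IsCubeTiling T) :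
    Set.InjOn (fun t : Fin n → ℝ => fun j => ε j (t j)) T ∧
    Set.BijOn (fun t : Fin n → ℝ => fun j => ε j (t j)) T Set.univ := by
  have key := code_exists_unique n ε hε T hT
  have hinj : Set.InjOn (fun t : Fin n → ℝ => fun j => ε j (t j)) T := by
    intro s hs t ht h
    obtain ⟨u, -, hu⟩ := key (fun j => ε j (s j))
    have h1 := hu s ⟨hs, fun j => rfl⟩
    have h2 := hu t ⟨ht, fun j => (congrFun h j).symm⟩
    rw [h1, h2]
  refine ⟨hinj, fun t _ => Set.mem_univ _, hinj, ?_⟩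
  intro v _
  obtain ⟨t, ⟨ht, hcode⟩, -⟩ := key v
  exact ⟨t, ht, funext hcode⟩
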